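/- arXiv:1106.0481 — 2 statements merged into one kernel-verified Lean document; each statement's English description precedes it below -/
import Mathlib

section
/- For all nonnegative integers r and m, the r-th Taylor coefficient at α = 1 of the function α ↦ 1/(2-α)_{m+1} equals S*_m(1,...,1)/(m+1)!, where S*_m has r arguments equal to 1; that is, (1/r!) (d^r/dα^r) [1/(2-α)_{m+1}] evaluated at α = 1 equals S*_m(1,...,1)/(m+1)!. -/
open scoped BigOperators

/-- Finite multiple harmonic star sum
`S*_m(k₁,…,kₙ) = ∑_{0 ≤ m₁ ≤ ⋯ ≤ mₙ ≤ m} 1/((m₁+1)^{k₁} ⋯ (mₙ+1)^{kₙ})`. -/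
noncomputable def SmStar (m : ℕ) (k : List ℕ) : ℝ :=
  ∑' t : Fin k.length → ℕ,
    if (∀ i, t i ≤ m) ∧ (∀ i j : Fin k.length, i ≤ j → t i ≤ t j) then
      ∏ i, (((t i : ℝ) + 1) ^ (k.get i))⁻¹
    else 0

open Finset Filter Topology Polynomial

/-! ### Combinatorial side -/

noncomputable def Fsum (r m : ℕ) : ℝ :=
  ∑ t ∈ Fintype.piFinset (fun _ : Fin r => Finset.range (m+1)),
    if (∀ i, t i ≤ m) ∧ (∀ i j : Fin r, i ≤ j → t i ≤ t j) then
      ∏ i, ((t i : ℝ) + 1)⁻¹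
    else 0

noncomputable def Hh : ℕ → ℕ → ℝ
  | 0, _ => 1
  | r+1, m => ∑ j ∈ Finset.range (m+1), ((j:ℝ)+1)⁻¹ * Hh r j

lemma Hh_zero (m : ℕ) : Hh 0 m = 1 := rfl

lemma Hh_succ (r m : ℕ) :
    Hh (r+1) m = ∑ j ∈ Finset.range (m+1), ((j:ℝ)+1)⁻¹ * Hh r j := rfl

lemma Hh_zero_right (r : ℕ) : Hh r 0 = 1 := by
  induction r with
  | zero => rfl
  | succ r ih => simp [Hh_succ, ih]

lemma Hh_rec (r m : ℕ) :
    Hh (r+1) (m+1) = Hh (r+1) m + ((m:ℝ)+2)⁻¹ * Hh r (m+1) := by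
  rw [Hh_succ, Hh_succ, Finset.sum_range_succ]
  congr 2
  push_cast
  ring

/-- Monotonicity condition for a `snoc` tuple. -/
lemma snoc_cond_iff {r m j : ℕ} (hj : j ≤ m) (s : Fin r → ℕ) :
    ((∀ i : Fin (r+1), (Fin.snoc s j : Fin (r+1) → ℕ) i ≤ m) ∧
        (∀ i k : Fin (r+1), i ≤ k → (Fin.snoc s j : Fin (r+1) → ℕ) i ≤ (Fin.snoc s j : Fin (r+1) → ℕ) k)) ↔
      ((∀ i, s i ≤ j) ∧ (∀ i k : Fin r, i ≤ k → s i ≤ s k)) := by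
  constructor
  · rintro ⟨-, hmono⟩
    refine ⟨fun i => ?_, fun i k hik => ?_⟩
    · simpa using hmono i.castSucc (Fin.last r) (Fin.le_last i.castSucc)
    · simpa using hmono i.castSucc k.castSucc (Fin.castSucc_le_castSucc_iff.2 hik)
  · rintro ⟨hle, hmono⟩
    refine ⟨fun i => ?_, fun i k hik => ?_⟩
    · rcases Fin.eq_castSucc_or_eq_last i with ⟨i', rfl⟩ | rfl
      · simpa using le_trans (hle i') hj
      · simpa using hj
    · rcases Fin.eq_castSucc_or_eq_last k with ⟨k', rfl⟩ | rfl
      · rcases Fin.eq_castSucc_or_eq_last i with ⟨i', rfl⟩ | rfl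
        · have h : i' ≤ k' := Fin.castSucc_le_castSucc_iff.1 hik
          simpa using hmono i' k' h
        · exact absurd hik (Fin.castSucc_lt_last k').not_ge
      · rcases Fin.eq_castSucc_or_eq_last i with ⟨i', rfl⟩ | rfl
        · simpa using hle i'
        · simp

lemma Fsum_zero (m : ℕ) : Fsum 0 m = 1 := by
  simp [Fsum]

lemma Fsum_eq_Hh (r m : ℕ) : Fsum r m = Hh r m := by
  induction r generalizing m with
  | zero => simp [Fsum_zero, Hh_zero]
  | succ r ih =>
    rw [Hh_succ]
    have hsplit : Fsum (r+1) m =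
        ∑ p ∈ (Finset.range (m+1)) ×ˢ
            (Fintype.piFinset fun _ : Fin r => Finset.range (m+1)),
          (if ((∀ i : Fin (r+1), (Fin.snoc p.2 p.1 : Fin (r+1) → ℕ) i ≤ m) ∧
              (∀ i k : Fin (r+1), i ≤ k → (Fin.snoc p.2 p.1 : Fin (r+1) → ℕ) i ≤ (Fin.snoc p.2 p.1 : Fin (r+1) → ℕ) k)) then
            ∏ i, (((Fin.snoc p.2 p.1 : Fin (r+1) → ℕ) i : ℝ) + 1)⁻¹ else 0) := by
      rw [Fsum]
      refine Finset.sum_nbij' (fun t => (t (Fin.last r), Fin.init t))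
        (fun p => (Fin.snoc p.2 p.1 : Fin (r+1) → ℕ)) ?_ ?_ ?_ ?_ ?_
      · intro t ht
        simp only [Fintype.mem_piFinset] at ht
        simp only [Finset.mem_product, Fintype.mem_piFinset]
        exact ⟨ht _, fun i => ht _⟩
      · intro p hp
        simp only [Finset.mem_product, Fintype.mem_piFinset] at hp
        simp only [Fintype.mem_piFinset]
        intro i
        rcases Fin.eq_castSucc_or_eq_last i with ⟨i', rfl⟩ | rfl
        · simpa using hp.2 i'
        · simpa using hp.1
      · intro t _
        exact Fin.snoc_init_self t
      · intro p _
        simp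
      · intro t _
        rw [Fin.snoc_init_self t]
    rw [hsplit, Finset.sum_product]
    refine Finset.sum_congr rfl fun j hj => ?_
    have hjm : j ≤ m := by simpa [Nat.lt_succ_iff] using hj
    have hterm : ∀ s : Fin r → ℕ,
        (if ((∀ i : Fin (r+1), (Fin.snoc s j : Fin (r+1) → ℕ) i ≤ m) ∧
            (∀ i k : Fin (r+1), i ≤ k → (Fin.snoc s j : Fin (r+1) → ℕ) i ≤ (Fin.snoc s j : Fin (r+1) → ℕ) k)) then
          ∏ i, (((Fin.snoc s j : Fin (r+1) → ℕ) i : ℝ) + 1)⁻¹ else 0) =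
        ((j:ℝ)+1)⁻¹ * (if ((∀ i, s i ≤ j) ∧ (∀ i k : Fin r, i ≤ k → s i ≤ s k)) then
          ∏ i, ((s i : ℝ) + 1)⁻¹ else 0) := by
      intro s
      rw [if_congr (snoc_cond_iff hjm s) rfl rfl]
      split
      · rw [Fin.prod_univ_castSucc]
        simp [mul_comm]
      · simp
    rw [Finset.sum_congr rfl fun s _ => hterm s, ← Finset.mul_sum]
    congr 1
    rw [← ih j, Fsum]
    refine (Finset.sum_subset (Fintype.piFinset_subset _ _
      (fun _ => Finset.range_subset_range.2 (by omega))) ?_).symm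
    intro s _ hs
    rw [if_neg]
    rintro ⟨h1, -⟩
    exact hs (by simpa [Fintype.mem_piFinset, Nat.lt_succ_iff] using h1)

lemma SmStar_eq_Fsum (m : ℕ) (k : List ℕ) (hk : ∀ i : Fin k.length, k.get i = 1) :
    SmStar m k = Fsum k.length m := by
  have hk' : ∀ i : Fin k.length, k[(i : ℕ)] = 1 := by
    simpa [List.get_eq_getElem] using hk
  rw [SmStar, Fsum,
    tsum_eq_sum (s := Fintype.piFinset fun _ : Fin k.length => Finset.range (m+1)) ?_]
  · refine Finset.sum_congr rfl fun t _ => ?_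
    simp [hk', List.get_eq_getElem]
  · intro t ht
    rw [if_neg]
    rintro ⟨h1, -⟩
    exact ht (by simpa [Fintype.mem_piFinset, Nat.lt_succ_iff] using h1)

lemma SmStar_replicate (r m : ℕ) : SmStar m (List.replicate r 1) = Hh r m := by
  rw [SmStar_eq_Fsum m (List.replicate r 1) (fun i => by simp)]
  rw [show (List.replicate r 1).length = r from List.length_replicate ..]
  exact Fsum_eq_Hh r m

/-! ### Analytic side -/

lemma eval_asc (n : ℕ) (x : ℝ) :
    (ascPochhammer ℝ n).eval x = ∏ j ∈ Finset.range n, (x + j) := by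
  induction n with
  | zero => simp [ascPochhammer_zero]
  | succ n ih =>
    rw [ascPochhammer_succ_right, Polynomial.eval_mul, ih, Finset.prod_range_succ]
    simp

lemma asc_pos {n : ℕ} {x : ℝ} (hx : x < 2) :
    0 < (ascPochhammer ℝ n).eval (2 - x) := by
  rw [eval_asc]
  refine Finset.prod_pos fun j _ => ?_
  have h2 : (0:ℝ) < 2 - x := by linarith
  positivity

noncomputable def ff (m : ℕ) : ℝ → ℝ :=
  fun α : ℝ => (Polynomial.eval (2 - α) (ascPochhammer ℝ (m + 1)))⁻¹

lemma ff_eq_prod (m : ℕ) :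
    ff m = fun x : ℝ => ∏ j ∈ Finset.range (m+1), (2 - x + (j:ℝ))⁻¹ := by
  funext x
  rw [ff, eval_asc, ← Finset.prod_inv_distrib]

lemma ff_contDiffOn (m : ℕ) : ContDiffOn ℝ (⊤ : ℕ∞) (ff m) (Set.Iio 2) := by
  rw [ff_eq_prod]
  refine contDiffOn_prod fun j _ => ?_
  refine ContDiffOn.inv ?_ fun x hx => ?_
  · exact (contDiffOn_const.sub contDiffOn_id).add contDiffOn_const
  · have hx2 : x < 2 := hx
    have h2 : (0:ℝ) < 2 - x := by linarith
    positivity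

lemma hasDerivAt_iteratedDeriv {g : ℝ → ℝ} {U : Set ℝ} (hU : IsOpen U)
    (hg : ContDiffOn ℝ (⊤ : ℕ∞) g U) (n : ℕ) {x : ℝ} (hx : x ∈ U) :
    HasDerivAt (iteratedDeriv n g) (iteratedDeriv (n+1) g x) x := by
  have h1 : DifferentiableOn ℝ (iteratedDerivWithin n g U) U :=
    hg.differentiableOn_iteratedDerivWithin (by exact_mod_cast WithTop.coe_lt_top _)
      hU.uniqueDiffOn
  have h2 : Set.EqOn (iteratedDerivWithin n g U) (iteratedDeriv n g) U := by
    intro y hy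
    rw [iteratedDerivWithin, iteratedDeriv, iteratedFDerivWithin_of_isOpen n hU hy]
  have h3 : DifferentiableAt ℝ (iteratedDeriv n g) x := by
    refine ((h1 x hx).differentiableAt (hU.mem_nhds hx)).congr_of_eventuallyEq ?_
    filter_upwards [hU.mem_nhds hx] with y hy using (h2 hy).symm
  rw [iteratedDeriv_succ]
  exact h3.hasDerivAt

lemma lin_leibniz {g : ℝ → ℝ} {U : Set ℝ} (hU : IsOpen U)
    (hg : ContDiffOn ℝ (⊤ : ℕ∞) g U) (c : ℝ) :
    ∀ n : ℕ, ∀ x ∈ U, iteratedDeriv n (fun y => g y * (c - y)) x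
      = iteratedDeriv n g x * (c - x) - n * iteratedDeriv (n - 1) g x := by
  intro n
  induction n with
  | zero => intro x hx; simp
  | succ n ih =>
    intro x hx
    rw [iteratedDeriv_succ]
    have hev : iteratedDeriv n (fun y => g y * (c - y)) =ᶠ[𝓝 x]
        fun y => iteratedDeriv n g y * (c - y) - n * iteratedDeriv (n - 1) g y := by
      filter_upwards [hU.mem_nhds hx] with y hy using ih y hy
    rw [hev.deriv_eq]
    have hd1 : HasDerivAt (iteratedDeriv n g) (iteratedDeriv (n+1) g x) x :=
      hasDerivAt_iteratedDeriv hU hg n hx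
    have hd2 : HasDerivAt (iteratedDeriv (n-1) g) (iteratedDeriv ((n-1)+1) g x) x :=
      hasDerivAt_iteratedDeriv hU hg (n-1) hx
    have hd3 : HasDerivAt (fun y : ℝ => c - y) (-1) x := by
      simpa using (hasDerivAt_id x).const_sub c
    have htot : HasDerivAt
        (fun y => iteratedDeriv n g y * (c - y) - (n:ℝ) * iteratedDeriv (n - 1) g y)
        (iteratedDeriv (n+1) g x * (c - x) + iteratedDeriv n g x * (-1)
          - (n:ℝ) * iteratedDeriv ((n-1)+1) g x) x :=
      (hd1.mul hd3).sub (hd2.const_mul (n : ℝ))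
    rw [htot.deriv]
    rcases Nat.eq_zero_or_pos n with hn | hn
    · subst hn; simp; ring
    · have h1 : (n - 1) + 1 = n := Nat.succ_pred_eq_of_pos hn
      rw [h1]
      push_cast
      ring

lemma ff_step (m : ℕ) : ∀ x ∈ Set.Iio (2:ℝ),
    ff m x = ff (m+1) x * (((m:ℝ) + 3) - x) := by
  intro x hx
  have hx2 : x < 2 := hx
  have hB : (0:ℝ) < 2 - x + ((m:ℝ)+1) := by
    have h2 : (0:ℝ) < 2 - x := by linarith
    positivity
  have hasc : (ascPochhammer ℝ (m+2)).eval (2 - x)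
      = (ascPochhammer ℝ (m+1)).eval (2 - x) * (2 - x + ((m:ℝ)+1)) := by
    rw [ascPochhammer_succ_right, Polynomial.eval_mul]
    push_cast
    simp
  rw [ff, ff, hasc, mul_inv]
  rw [show ((m:ℝ) + 3) - x = 2 - x + ((m:ℝ)+1) by ring]
  rw [mul_assoc, inv_mul_cancel₀ hB.ne', mul_one]

lemma ff_rec (m r : ℕ) :
    iteratedDeriv r (ff m) 1 =
      iteratedDeriv r (ff (m+1)) 1 * ((m:ℝ) + 2)
        - r * iteratedDeriv (r-1) (ff (m+1)) 1 := by
  have h1 : (1:ℝ) ∈ Set.Iio (2:ℝ) := by norm_num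
  have heq : Set.EqOn (ff m) (fun y => ff (m+1) y * (((m:ℝ)+3) - y)) (Set.Iio 2) :=
    fun x hx => ff_step m x hx
  have h := heq.iteratedDeriv_of_isOpen isOpen_Iio r h1
  rw [h, lin_leibniz isOpen_Iio (ff_contDiffOn (m+1)) ((m:ℝ)+3) r 1 h1]
  ring_nf

lemma geom_deriv (c : ℝ) : ∀ (r : ℕ), ∀ x < c,
    iteratedDeriv r (fun y => (c - y)⁻¹) x = (r.factorial : ℝ) * ((c - x) ^ (r+1))⁻¹ := by
  intro r
  induction r with
  | zero => intro x hx; simp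
  | succ r ih =>
    intro x hx
    have hne : c - x ≠ 0 := sub_ne_zero_of_ne hx.ne'
    rw [iteratedDeriv_succ]
    have hev : iteratedDeriv r (fun y => (c - y)⁻¹) =ᶠ[𝓝 x]
        fun y => (r.factorial : ℝ) * ((c - y) ^ (r+1))⁻¹ := by
      filter_upwards [Iio_mem_nhds hx] with y hy using ih y hy
    rw [hev.deriv_eq]
    have hb : HasDerivAt (fun y : ℝ => c - y) (-1) x := by
      simpa using (hasDerivAt_id x).const_sub c
    have hpow : HasDerivAt (fun y : ℝ => (c - y) ^ (r+1))
        (((r:ℝ)+1) * (c - x) ^ r * (-1)) x := by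
      have h := hb.fun_pow (r+1)
      simpa using h
    have hinv := (hpow.fun_inv (pow_ne_zero _ hne)).const_mul (r.factorial : ℝ)
    rw [hinv.deriv]
    rw [Nat.factorial_succ]
    push_cast
    field_simp
    ring

lemma core (m : ℕ) : ∀ r : ℕ,
    iteratedDeriv r (ff m) 1 = (r.factorial : ℝ) * Hh r m / ((m+1).factorial : ℝ) := by
  induction m with
  | zero =>
    intro r
    have hff : ff 0 = fun y : ℝ => (2 - y)⁻¹ := by
      funext y
      rw [ff, ascPochhammer_one, Polynomial.eval_X]
    rw [hff, geom_deriv 2 r 1 (by norm_num), Hh_zero_right]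
    norm_num
  | succ m ih =>
    intro r
    have hfac : ((m+1+1).factorial : ℝ) = ((m:ℝ)+2) * ((m+1).factorial : ℝ) := by
      rw [Nat.factorial_succ]; push_cast; ring
    have hpos : ((m+1).factorial : ℝ) ≠ 0 := by positivity
    have hm2 : ((m:ℝ)+2) ≠ 0 := by positivity
    induction r with
    | zero =>
      rw [iteratedDeriv_zero]
      have hval : ff (m+1) 1 = (((m+1+1).factorial : ℝ))⁻¹ := by
        rw [ff]
        norm_num
      rw [hval, Hh_zero]
      simp
    | succ r ihr =>
      have h1 := ff_rec m (r+1)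
      rw [ih (r+1)] at h1
      have h2 : (r+1) - 1 = r := rfl
      rw [h2, ihr] at h1
      have hrec := Hh_rec r m
      have hfacr : ((r+1).factorial : ℝ) = ((r:ℝ)+1) * (r.factorial : ℝ) := by
        rw [Nat.factorial_succ]; push_cast; ring
      have hX : iteratedDeriv (r+1) (ff (m+1)) 1 =
          (((r+1).factorial : ℝ) * Hh (r+1) m / ((m+1).factorial : ℝ)
            + ((r:ℝ)+1) * ((r.factorial : ℝ) * Hh r (m+1) / ((m+1+1).factorial : ℝ)))
            / ((m:ℝ)+2) := by
        rw [eq_div_iff hm2]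
        push_cast at h1
        linarith [h1]
      rw [hX, hrec, hfac, hfacr]
      field_simp

/-- For all `r, m ≥ 0`, the `r`-th Taylor coefficient at `α = 1` of
`α ↦ 1/(2-α)_{m+1}` equals `S*_m({1}^r)/(m+1)!`. -/
theorem stmt6 (r m : ℕ) :
    ((r.factorial : ℝ))⁻¹ *
      iteratedDeriv r (fun α : ℝ => (Polynomial.eval (2 - α) (ascPochhammer ℝ (m + 1)))⁻¹) 1 =
    SmStar m (List.replicate r 1) / (m + 1).factorial := by
  have hcore := core m r
  rw [show (fun α : ℝ => (Polynomial.eval (2 - α) (ascPochhammer ℝ (m + 1)))⁻¹) = ff m from rfl]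
  rw [hcore, SmStar_replicate]
  have hr : (r.factorial : ℝ) ≠ 0 := by positivity
  field_simp
end

section
/- For every nonnegative integer m and every complex number α, the identity (α)_m/(2-α)_{m+1} = (1/(2-α+m)) ∑_{i=0}^{m} 2^i ∑_{0 ≤ m_1 < ... < m_i < m} ∏_{j=1}^{i} (α-1)/(2-α+m_j) holds (as an identity of rational functions, valid whenever 2-α+k ≠ 0 for all integers 0 ≤ k ≤ m). -/
open scoped BigOperators

lemma poch_prod (x : ℂ) (n : ℕ) :
    Polynomial.eval x (ascPochhammer ℂ n) = ∏ k ∈ Finset.range n, (x + k) := by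
  induction n with
  | zero => simp
  | succ n ih => rw [ascPochhammer_succ_eval, ih, Finset.prod_range_succ]

lemma tsum_strict_mono_eq (i m : ℕ) (x : ℕ → ℂ) :
    (∑' t : Fin i → ℕ,
        if (∀ j, t j < m) ∧ (∀ j l : Fin i, j < l → t j < t l) then
          ∏ j, x (t j)
        else 0) =
      ∑ s ∈ (Finset.range m).powersetCard i, ∏ k ∈ s, x k := by
  classical
  set f : (Fin i → ℕ) → ℂ := fun t =>
    if (∀ j, t j < m) ∧ (∀ j l : Fin i, j < l → t j < t l) then ∏ j, x (t j) else 0 with hf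
  set S : Finset (Fin i → ℕ) :=
    (Fintype.piFinset fun _ => Finset.range m).filter
      (fun t => (∀ j, t j < m) ∧ (∀ j l : Fin i, j < l → t j < t l)) with hS
  have hvanish : ∀ t ∉ S, f t = 0 := by
    intro t ht
    simp only [hS, Finset.mem_filter, Fintype.mem_piFinset, Finset.mem_range] at ht
    by_cases hc : (∀ j, t j < m) ∧ (∀ j l : Fin i, j < l → t j < t l)
    · exact absurd ⟨hc.1, hc⟩ ht
    · simp [hf, hc]
  rw [tsum_eq_sum hvanish]
  have hfS : ∀ t ∈ S, f t = ∏ j, x (t j) := by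
    intro t ht
    simp only [hS, Finset.mem_filter] at ht
    simp only [hf]
    exact if_pos ht.2
  rw [Finset.sum_congr rfl hfS]
  refine Finset.sum_bij' (fun t _ => Finset.image t Finset.univ)
    (fun s hs => fun j => s.orderEmbOfFin (Finset.mem_powersetCard.mp hs).2 j) ?_ ?_ ?_ ?_ ?_
  · -- maps into powersetCard
    intro t ht
    simp only [hS, Finset.mem_filter, Fintype.mem_piFinset, Finset.mem_range] at ht
    have hsm : StrictMono t := by
      intro a b hab; exact ht.2.2 a b hab
    rw [Finset.mem_powersetCard]
    constructor
    · intro k hk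
      simp only [Finset.mem_image, Finset.mem_univ, true_and] at hk
      obtain ⟨j, rfl⟩ := hk
      simpa using ht.2.1 j
    · rw [Finset.card_image_of_injective _ hsm.injective, Finset.card_univ, Fintype.card_fin]
  · -- maps into S
    intro s hs
    obtain ⟨hsub, hcard⟩ := Finset.mem_powersetCard.mp hs
    simp only [hS, Finset.mem_filter, Fintype.mem_piFinset, Finset.mem_range]
    have hmem : ∀ j, (s.orderEmbOfFin hcard) j < m := by
      intro j
      have := hsub (s.orderEmbOfFin_mem hcard j)
      simpa using this
    exact ⟨hmem, hmem, fun j l hjl => (s.orderEmbOfFin hcard).strictMono hjl⟩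
  · -- left inverse
    intro t ht
    simp only [hS, Finset.mem_filter, Fintype.mem_piFinset, Finset.mem_range] at ht
    have hsm : StrictMono t := fun a b hab => ht.2.2 a b hab
    have hcard : (Finset.image t Finset.univ).card = i := by
      rw [Finset.card_image_of_injective _ hsm.injective, Finset.card_univ, Fintype.card_fin]
    have := (Finset.orderEmbOfFin_unique (f := t) hcard
      (fun j => Finset.mem_image_of_mem t (Finset.mem_univ j)) hsm).symm
    funext j
    exact congrFun this j
  · -- right inverse
    intro s hs
    obtain ⟨hsub, hcard⟩ := Finset.mem_powersetCard.mp hs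
    apply Finset.coe_injective
    push_cast [Finset.coe_image, Finset.coe_univ, Set.image_univ]
    exact Finset.range_orderEmbOfFin s hcard
  · -- values agree
    intro t ht
    simp only [hS, Finset.mem_filter, Fintype.mem_piFinset, Finset.mem_range] at ht
    have hsm : StrictMono t := fun a b hab => ht.2.2 a b hab
    rw [Finset.prod_image (fun a _ b _ hab => hsm.injective hab)]

/-- For every `m ≥ 0` and `α ∈ ℂ` with `2-α+k ≠ 0` for `0 ≤ k ≤ m`,
`(α)_m/(2-α)_{m+1} = (1/(2-α+m)) ∑_{i=0}^{m} 2^i ∑_{0≤m₁<⋯<m_i<m} ∏_j (α-1)/(2-α+m_j)`. -/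
theorem stmt8 (m : ℕ) (α : ℂ) (h : ∀ k : ℕ, k ≤ m → 2 - α + (k : ℂ) ≠ 0) :
    Polynomial.eval α (ascPochhammer ℂ m) /
        Polynomial.eval (2 - α) (ascPochhammer ℂ (m + 1)) =
      (2 - α + (m : ℂ))⁻¹ *
        ∑ i ∈ Finset.range (m + 1), 2 ^ i *
          ∑' t : Fin i → ℕ,
            if (∀ j, t j < m) ∧ (∀ j l : Fin i, j < l → t j < t l) then
              ∏ j, (α - 1) / (2 - α + (t j : ℂ))
            else 0 := by
  classical
  set x : ℕ → ℂ := fun k => (α - 1) / (2 - α + k) with hx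
  -- rewrite tsum
  have hts : ∀ i, (∑' t : Fin i → ℕ,
      if (∀ j, t j < m) ∧ (∀ j l : Fin i, j < l → t j < t l) then
        ∏ j, (α - 1) / (2 - α + (t j : ℂ)) else 0) =
      ∑ s ∈ (Finset.range m).powersetCard i, ∏ k ∈ s, x k := fun i =>
    tsum_strict_mono_eq i m x
  simp only [hts]
  -- regroup the double sum as a sum over the whole powerset
  have hcardrange : (Finset.range m).card = m := Finset.card_range m
  have hregroup : ∑ i ∈ Finset.range (m + 1),
      (2 : ℂ) ^ i * ∑ s ∈ (Finset.range m).powersetCard i, ∏ k ∈ s, x k =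
      ∑ s ∈ (Finset.range m).powerset, ∏ k ∈ s, (2 * x k) := by
    rw [Finset.sum_powerset, hcardrange]
    refine Finset.sum_congr rfl fun i _ => ?_
    rw [Finset.mul_sum]
    refine Finset.sum_congr rfl fun s hs => ?_
    have hcard : s.card = i := (Finset.mem_powersetCard.mp hs).2
    rw [Finset.prod_mul_distrib, Finset.prod_const, hcard]
  rw [hregroup]
  have hprodadd : ∑ s ∈ (Finset.range m).powerset, ∏ k ∈ s, (2 * x k) =
      ∏ k ∈ Finset.range m, (2 * x k + 1) := by
    rw [Finset.prod_add]
    refine Finset.sum_congr rfl fun s _ => ?_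
    simp
  rw [hprodadd]
  have hterm : ∀ k ∈ Finset.range m, 2 * x k + 1 = (α + k) / (2 - α + k) := by
    intro k hk
    have hk' : 2 - α + (k : ℂ) ≠ 0 := h k (le_of_lt (Finset.mem_range.mp hk))
    simp only [hx]
    field_simp [hx]
    ring
  rw [Finset.prod_congr rfl hterm]
  rw [poch_prod, poch_prod, Finset.prod_range_succ]
  rw [Finset.prod_div_distrib]
  have hne : ∀ k ∈ Finset.range m, (2 - α + (k : ℂ)) ≠ 0 := fun k hk =>
    h k (le_of_lt (Finset.mem_range.mp hk))
  have hprodne : ∏ k ∈ Finset.range m, (2 - α + (k : ℂ)) ≠ 0 :=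
    Finset.prod_ne_zero_iff.mpr hne
  have hm : 2 - α + (m : ℂ) ≠ 0 := h m le_rfl
  field_simp
end
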